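/- Let ρ(t,x) = (4πt)^{−1/2} exp(−x²/(4t)), γ ∈ (1/2,1), and let σ: [0,∞) × ℝ → ℝ be bounded by M and jointly Hölder continuous of order γ with constant L. Fix t > 0 and x ∈ ℝ. Then there exists a constant C depending only on M, L, γ, and t such that for all real ξ with |ξ| ≥ t^{−1}, |∫_0^t (∫_ℝ ρ(t − s, x − y) σ(s, y) dy) e^{isξ} ds| ≤ C |ξ|^{−γ}. -/

import Mathlib

open MeasureTheory Set

/-- The Gaussian heat kernel `ρ(t,x) = (4πt)^{-1/2} exp(-x²/(4t))`. -/
noncomputable def heatKernel (t x : ℝ) : ℝ :=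
  (4 * Real.pi * t) ^ (-(1:ℝ)/2) * Real.exp (-(x ^ 2) / (4 * t))

namespace HeatAux

lemma sqrt_diff_le {a h : ℝ} (hh : 0 ≤ h) (hah : 0 < a + h) :
    Real.sqrt (a + h) - Real.sqrt a ≤ h / Real.sqrt (a + h) := by
  have hs : 0 < Real.sqrt (a + h) := Real.sqrt_pos.2 hah
  rw [le_div_iff₀ hs]
  have hmm : Real.sqrt (a+h) * Real.sqrt (a+h) = a + h := Real.mul_self_sqrt hah.le
  rcases le_or_gt a 0 with ha | ha
  · have h0 : Real.sqrt a = 0 := Real.sqrt_eq_zero'.2 ha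
    rw [h0]
    nlinarith
  · have h1 : Real.sqrt a * Real.sqrt a = a := Real.mul_self_sqrt ha.le
    have h2 : Real.sqrt a ≤ Real.sqrt (a + h) := Real.sqrt_le_sqrt (by linarith)
    nlinarith [Real.sqrt_nonneg a]

lemma continuous_of_holder {f : ℝ → ℝ → ℝ} {L γ : ℝ} (hγ : 0 < γ)
    (H : ∀ s₁ s₂ y₁ y₂ : ℝ, |f s₁ y₁ - f s₂ y₂| ≤ L * (|s₁-s₂|^γ + |y₁-y₂|^γ)) :
    Continuous fun p : ℝ × ℝ => f p.1 p.2 := by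
  rw [continuous_iff_continuousAt]
  intro p
  rw [ContinuousAt, tendsto_iff_dist_tendsto_zero]
  have hcont : Continuous fun q : ℝ × ℝ => L * (|q.1 - p.1|^γ + |q.2 - p.2|^γ) := by
    refine continuous_const.mul (Continuous.add ?_ ?_)
    · exact ((continuous_fst.sub continuous_const).abs).rpow_const (fun q => Or.inr hγ.le)
    · exact ((continuous_snd.sub continuous_const).abs).rpow_const (fun q => Or.inr hγ.le)
  have h0 : Filter.Tendsto (fun q : ℝ × ℝ => L * (|q.1 - p.1|^γ + |q.2 - p.2|^γ))
      (nhds p) (nhds 0) := by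
    have := hcont.tendsto p
    simpa [Real.zero_rpow hγ.ne'] using this
  refine squeeze_zero (fun q => dist_nonneg) (fun q => ?_) h0
  rw [Real.dist_eq]
  exact H _ _ _ _

lemma integral_heatKernel_subst {a : ℝ} (ha : 0 < a) (x : ℝ) (f : ℝ → ℝ) :
    (∫ y, heatKernel a (x - y) * f y) =
      ∫ w, (4*Real.pi)^(-(1:ℝ)/2) * Real.exp (-(w^2)/4) * f (x - Real.sqrt a * w) := by
  have hsa : 0 < Real.sqrt a := Real.sqrt_pos.2 ha
  set G : ℝ → ℝ := fun u => heatKernel a u * f (x - u) with hG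
  have step1 : (∫ y, heatKernel a (x - y) * f y) = ∫ u, G u := by
    calc (∫ y, heatKernel a (x - y) * f y)
        = ∫ u, heatKernel a (x - (x - u)) * f (x - u) :=
          (integral_sub_left_eq_self (fun y => heatKernel a (x - y) * f y) volume x).symm
      _ = ∫ u, G u := by congr 1; funext u; simp [hG, sub_sub_cancel]
  have step2 : (∫ u, G u) = Real.sqrt a • ∫ w, G (Real.sqrt a * w) := by
    rw [Measure.integral_comp_mul_left G (Real.sqrt a), abs_of_nonneg (inv_nonneg.2 hsa.le),
      smul_smul, mul_inv_cancel₀ hsa.ne', one_smul]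
  have hpt : ∀ w : ℝ, Real.sqrt a * G (Real.sqrt a * w)
      = (4*Real.pi)^(-(1:ℝ)/2) * Real.exp (-(w^2)/4) * f (x - Real.sqrt a * w) := by
    intro w
    have e1 : -((Real.sqrt a * w)^2) / (4*a) = -(w^2)/4 := by
      rw [mul_pow, Real.sq_sqrt ha.le]; field_simp
    have e2 : Real.sqrt a * (4*Real.pi*a)^(-(1:ℝ)/2) = (4*Real.pi)^(-(1:ℝ)/2) := by
      calc Real.sqrt a * (4*Real.pi*a)^(-(1:ℝ)/2)
          = a ^ ((1:ℝ)/2) * ((4*Real.pi)^(-(1:ℝ)/2) * a^(-(1:ℝ)/2)) := by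
            rw [Real.mul_rpow (by positivity) ha.le, Real.sqrt_eq_rpow]
        _ = (4*Real.pi)^(-(1:ℝ)/2) * a ^ ((1:ℝ)/2 + -(1:ℝ)/2) := by
            rw [Real.rpow_add ha]; ring
        _ = (4*Real.pi)^(-(1:ℝ)/2) := by norm_num
    show Real.sqrt a * (heatKernel a (Real.sqrt a * w) * f (x - Real.sqrt a * w)) = _
    unfold heatKernel
    rw [e1, ← mul_assoc, ← mul_assoc, e2]
  calc (∫ y, heatKernel a (x - y) * f y)
      = Real.sqrt a • ∫ w, G (Real.sqrt a * w) := by rw [step1, step2]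
    _ = ∫ w, Real.sqrt a * G (Real.sqrt a * w) := by
        rw [← integral_smul]; simp [smul_eq_mul]
    _ = _ := by congr 1; funext w; rw [hpt]

end HeatAux

open HeatAux

set_option maxHeartbeats 1600000 in
/-- Fourier-type decay of `∫_0^t (∫ ρ(t-s,x-y) σ(s,y) dy) e^{isξ} ds`
for bounded, jointly γ-Hölder `σ` and `|ξ| ≥ t⁻¹`. -/
theorem heat_convolution_fourier_decay
    (σ : ℝ → ℝ → ℝ) (γ L M : ℝ) (hγ : γ ∈ Ioo (1/2 : ℝ) 1) (hL : 0 < L)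
    (hbdd : ∀ s y, 0 ≤ s → |σ s y| ≤ M)
    (hHolder : ∀ t₁ t₂ x₁ x₂ : ℝ, 0 ≤ t₁ → 0 ≤ t₂ →
      |σ t₁ x₁ - σ t₂ x₂| ≤ L * (|t₁ - t₂| ^ γ + |x₁ - x₂| ^ γ))
    (t x : ℝ) (ht : 0 < t) :
    ∃ C > 0, ∀ ξ : ℝ, t⁻¹ ≤ |ξ| →
      ‖∫ s in Ioo 0 t,
          ((∫ y, heatKernel (t - s) (x - y) * σ s y : ℝ) : ℂ)
            * Complex.exp (Complex.I * s * ξ)‖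
        ≤ C * |ξ| ^ (-γ) := by
  obtain ⟨hγ1, hγ2⟩ := hγ
  have hγ0 : (0:ℝ) < γ := by linarith
  set b : ℝ := (4*Real.pi)^(-(1:ℝ)/2) with hbdef
  have hbpos : 0 < b := Real.rpow_pos_of_pos (by positivity) _
  set φ : ℝ → ℝ := fun w => b * Real.exp (-(w^2)/4) with hφdef
  set σ' : ℝ → ℝ → ℝ := fun s y => σ (max s 0) y with hσ'def
  have hσ'b : ∀ s y, |σ' s y| ≤ M := fun s y => hbdd _ y (le_max_right _ _)
  have hM : 0 ≤ M := (abs_nonneg _).trans (hσ'b 0 0)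
  have hσ'h : ∀ s₁ s₂ y₁ y₂ : ℝ, |σ' s₁ y₁ - σ' s₂ y₂| ≤ L * (|s₁-s₂|^γ + |y₁-y₂|^γ) := by
    intro s₁ s₂ y₁ y₂
    refine (hHolder _ _ _ _ (le_max_right _ _) (le_max_right _ _)).trans ?_
    have h1 : |max s₁ 0 - max s₂ 0| ≤ |s₁ - s₂| := abs_max_sub_max_le_abs _ _ _
    have h2 : |max s₁ 0 - max s₂ 0|^γ ≤ |s₁-s₂|^γ :=
      Real.rpow_le_rpow (abs_nonneg _) h1 hγ0.le
    have h3 := mul_le_mul_of_nonneg_left (add_le_add_left h2 (|y₁-y₂|^γ)) hL.le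
    exact h3
  have hσ'c : Continuous fun p : ℝ × ℝ => σ' p.1 p.2 := continuous_of_holder hγ0 hσ'h
  -- φ facts
  have hφcont : Continuous φ := by
    refine continuous_const.mul (Real.continuous_exp.comp ?_)
    exact ((continuous_pow 2).neg).div_const 4
  have hφnn : ∀ w, 0 ≤ φ w := fun w => mul_nonneg hbpos.le (Real.exp_pos _).le
  have hexpform : ∀ w : ℝ, Real.exp (-(4⁻¹:ℝ) * w^2) = Real.exp (-(w^2)/4) := by
    intro w; congr 1; ring
  have hφint : Integrable φ := by
    have h0 : Integrable (fun w : ℝ => Real.exp (-(4⁻¹:ℝ) * w^2)) :=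
      integrable_exp_neg_mul_sq (by norm_num)
    have h1 := h0.const_mul b
    refine h1.congr (Filter.Eventually.of_forall fun w => ?_)
    show b * Real.exp (-(4⁻¹:ℝ) * w^2) = b * Real.exp (-(w^2)/4)
    rw [hexpform]
  have habs : ∀ w : ℝ, |w| ^ γ ≤ 1 + |w| := by
    intro w
    rcases le_or_gt (|w|) 1 with hw | hw
    · have := Real.rpow_le_one (abs_nonneg w) hw hγ0.le
      linarith [abs_nonneg w]
    · have h1 : |w|^γ ≤ |w|^(1:ℝ) := Real.rpow_le_rpow_of_exponent_le hw.le hγ2.le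
      rw [Real.rpow_one] at h1; linarith
  have hφγint : Integrable (fun w => φ w * |w|^γ) := by
    have h1 : Integrable (fun w : ℝ => |w * Real.exp (-(4⁻¹:ℝ) * w^2)|) :=
      (integrable_mul_exp_neg_mul_sq (by norm_num)).abs
    refine Integrable.mono' (hφint.add (h1.const_mul b)) ?_ (Filter.Eventually.of_forall fun w => ?_)
    · exact (hφcont.mul ((continuous_abs).rpow_const fun w => Or.inr hγ0.le)).aestronglyMeasurable
    · have hrnn : 0 ≤ |w|^γ := Real.rpow_nonneg (abs_nonneg w) _
      rw [Real.norm_eq_abs, abs_of_nonneg (mul_nonneg (hφnn w) hrnn)]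
      have : φ w * |w|^γ ≤ φ w * (1 + |w|) :=
        mul_le_mul_of_nonneg_left (habs w) (hφnn w)
      refine this.trans (le_of_eq ?_)
      simp only [Pi.add_apply]
      rw [abs_mul, abs_of_nonneg (Real.exp_pos _).le, hexpform]
      simp only [hφdef]; ring
  set c₀ : ℝ := ∫ w, φ w with hc₀def
  set m : ℝ := ∫ w, φ w * |w|^γ with hmdef
  have hc₀ : 0 ≤ c₀ := integral_nonneg hφnn
  have hm : 0 ≤ m := integral_nonneg fun w =>
    mul_nonneg (hφnn w) (Real.rpow_nonneg (abs_nonneg w) _)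
  -- the convolved function
  set g : ℝ → ℝ := fun s => ∫ w, φ w * σ' s (x - Real.sqrt (t - s) * w) with hgdef
  have hgmeas : ∀ s, Continuous (fun w => φ w * σ' s (x - Real.sqrt (t - s) * w)) := by
    intro s
    refine hφcont.mul (hσ'c.comp (continuous_const.prodMk ?_))
    exact continuous_const.sub (continuous_const.mul continuous_id)
  have hgptbd : ∀ s w, ‖φ w * σ' s (x - Real.sqrt (t - s) * w)‖ ≤ M * φ w := by
    intro s w
    rw [Real.norm_eq_abs, abs_mul, abs_of_nonneg (hφnn w)]
    calc φ w * |σ' s (x - Real.sqrt (t - s) * w)| ≤ φ w * M :=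
          mul_le_mul_of_nonneg_left (hσ'b _ _) (hφnn w)
      _ = M * φ w := mul_comm _ _
  have hgint : ∀ s, Integrable (fun w => φ w * σ' s (x - Real.sqrt (t - s) * w)) := by
    intro s
    exact (hφint.const_mul M).mono' (hgmeas s).aestronglyMeasurable
      (Filter.Eventually.of_forall (hgptbd s))
  have hgbdd : ∀ s, |g s| ≤ M * c₀ := by
    intro s
    have h1 : ‖∫ w, φ w * σ' s (x - Real.sqrt (t - s) * w)‖ ≤ ∫ w, M * φ w :=
      norm_integral_le_of_norm_le (hφint.const_mul M)
        (Filter.Eventually.of_forall (hgptbd s))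
    rw [integral_const_mul] at h1
    rw [hgdef]
    exact (Real.norm_eq_abs _ ▸ h1)
  have hgcont : Continuous g := by
    refine continuous_of_dominated (fun s => (hgmeas s).aestronglyMeasurable)
      (fun s => Filter.Eventually.of_forall (hgptbd s)) (hφint.const_mul M)
      (Filter.Eventually.of_forall fun w => ?_)
    refine continuous_const.mul (hσ'c.comp (continuous_id.prodMk ?_))
    exact continuous_const.sub
      ((Real.continuous_sqrt.comp (continuous_const.sub continuous_id)).mul continuous_const)
  -- the key Hölder estimate for increments of g
  have hgdiff : ∀ h s : ℝ, 0 < h → s ≤ t →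
      |g s - g (s - h)| ≤ L*c₀*h^γ + L*m*h^γ*((t - s) + h)^(-(γ/2)) := by
    intro h s hh hst
    have hahpos : (0:ℝ) < (t - s) + h := by linarith
    set δ : ℝ := Real.sqrt ((t - s) + h) - Real.sqrt (t - s) with hδdef
    have hts : t - (s - h) = (t - s) + h := by ring
    have hδ0 : 0 ≤ δ := sub_nonneg.2 (Real.sqrt_le_sqrt (by linarith))
    have hδle : δ ≤ h / Real.sqrt ((t-s)+h) := sqrt_diff_le hh.le hahpos
    have hpw : ∀ w : ℝ, |φ w * σ' s (x - Real.sqrt (t-s)*w)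
        - φ w * σ' (s-h) (x - Real.sqrt (t-(s-h))*w)|
        ≤ L*h^γ * φ w + (L*δ^γ) * (φ w * |w|^γ) := by
      intro w
      rw [← mul_sub, abs_mul, abs_of_nonneg (hφnn w)]
      have h1 : |σ' s (x - Real.sqrt (t-s)*w) - σ' (s-h) (x - Real.sqrt (t-(s-h))*w)|
          ≤ L * (h^γ + (δ*|w|)^γ) := by
        refine (hσ'h _ _ _ _).trans ?_
        have e1 : |s - (s-h)| = h := by
          rw [show s - (s-h) = h by ring, abs_of_pos hh]
        have e2 : |(x - Real.sqrt (t-s)*w) - (x - Real.sqrt (t-(s-h))*w)| = δ * |w| := by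
          rw [show (x - Real.sqrt (t-s)*w) - (x - Real.sqrt (t-(s-h))*w)
              = (Real.sqrt (t-(s-h)) - Real.sqrt (t-s)) * w by ring, abs_mul, hts]
          rw [abs_of_nonneg hδ0]
        rw [e1, e2]
      calc φ w * |σ' s (x - Real.sqrt (t-s)*w) - σ' (s-h) (x - Real.sqrt (t-(s-h))*w)|
          ≤ φ w * (L * (h^γ + (δ*|w|)^γ)) := mul_le_mul_of_nonneg_left h1 (hφnn w)
        _ = L*h^γ * φ w + (L*δ^γ) * (φ w * |w|^γ) := by
            rw [Real.mul_rpow hδ0 (abs_nonneg w)]; ring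
    have hsubint : g s - g (s-h) = ∫ w, (φ w * σ' s (x - Real.sqrt (t-s)*w)
        - φ w * σ' (s-h) (x - Real.sqrt (t-(s-h))*w)) :=
      (integral_sub (hgint s) (hgint (s-h))).symm
    have hIb : Integrable (fun w => L*h^γ * φ w + (L*δ^γ) * (φ w * |w|^γ)) := by
      have i1 := hφint.const_mul (L*h^γ)
      have i2 := hφγint.const_mul (L*δ^γ)
      exact i1.add i2
    have h2 : |g s - g (s-h)| ≤ ∫ w, (L*h^γ * φ w + (L*δ^γ) * (φ w * |w|^γ)) := by
      rw [hsubint, ← Real.norm_eq_abs]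
      exact norm_integral_le_of_norm_le hIb
        (Filter.Eventually.of_forall fun w => (Real.norm_eq_abs _ ▸ hpw w))
    have h3 : (∫ w, (L*h^γ * φ w + (L*δ^γ) * (φ w * |w|^γ)))
        = L*h^γ*c₀ + L*δ^γ*m := by
      have e₁ : (∫ w, L*h^γ * φ w) = L*h^γ*c₀ := by
        rw [hc₀def]; exact integral_const_mul _ _
      have e₂ : (∫ w, (L*δ^γ) * (φ w * |w|^γ)) = L*δ^γ*m := by
        rw [hmdef]; exact integral_const_mul _ _
      rw [integral_add (hφint.const_mul _) (hφγint.const_mul _), e₁, e₂]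
    have h4 : δ^γ ≤ h^γ * ((t-s)+h)^(-(γ/2)) := by
      have h5 : δ^γ ≤ (h / Real.sqrt ((t-s)+h))^γ := Real.rpow_le_rpow hδ0 hδle hγ0.le
      refine h5.trans (le_of_eq ?_)
      rw [Real.div_rpow hh.le (Real.sqrt_nonneg _), Real.sqrt_eq_rpow,
        ← Real.rpow_mul hahpos.le, div_eq_mul_inv, ← Real.rpow_neg hahpos.le]
      congr 1
      ring
    have h6 : L*δ^γ*m ≤ L*m*h^γ*((t-s)+h)^(-(γ/2)) := by
      have := mul_le_mul_of_nonneg_right (mul_le_mul_of_nonneg_left h4 hL.le) hm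
      calc L*δ^γ*m = L * δ^γ * m := rfl
        _ ≤ L * (h^γ * ((t-s)+h)^(-(γ/2))) * m := this
        _ = L*m*h^γ*((t-s)+h)^(-(γ/2)) := by ring
    calc |g s - g (s-h)| ≤ L*h^γ*c₀ + L*δ^γ*m := by rw [← h3]; exact h2
      _ ≤ L*c₀*h^γ + L*m*h^γ*((t-s)+h)^(-(γ/2)) := by
          rw [show L*h^γ*c₀ = L*c₀*h^γ by ring]; linarith

  -- constants
  set A : ℝ := L*c₀*t + L*m*(t^(1-γ/2)/(1-γ/2)) with hAdef
  have hden : (0:ℝ) < 1-γ/2 := by linarith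
  have hA0 : 0 ≤ A := by
    have h1 : 0 ≤ t^(1-γ/2) := Real.rpow_nonneg ht.le _
    have h2 : 0 ≤ t^(1-γ/2)/(1-γ/2) := div_nonneg h1 hden.le
    have h3 := add_nonneg (mul_nonneg (mul_nonneg hL.le hc₀) ht.le)
      (mul_nonneg (mul_nonneg hL.le hm) h2)
    rw [hAdef]; exact h3
  have htγpos : 0 < t^(1-γ) := Real.rpow_pos_of_pos ht _
  set C : ℝ := (4*(M*c₀)*Real.pi*t^(1-γ) + A*Real.pi^γ)/2 + 1 with hCdef
  have hMc₀ : 0 ≤ M*c₀ := mul_nonneg hM hc₀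
  have hCpos : 0 < C := by
    have h1 : 0 ≤ 4*(M*c₀)*Real.pi*t^(1-γ) :=
      mul_nonneg (mul_nonneg (mul_nonneg (by norm_num) hMc₀) Real.pi_pos.le) htγpos.le
    have h2 : 0 ≤ A*Real.pi^γ := mul_nonneg hA0 (Real.rpow_nonneg Real.pi_pos.le _)
    rw [hCdef]; positivity
  refine ⟨C, hCpos, fun ξ hξ => ?_⟩
  have hξpos : 0 < |ξ| := lt_of_lt_of_le (inv_pos.2 ht) hξ
  have hξγ : 0 < |ξ|^(-γ) := Real.rpow_pos_of_pos hξpos _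
  set h : ℝ := Real.pi / |ξ| with hhdef
  have hhpos : 0 < h := div_pos Real.pi_pos hξpos
  have hconv : h ≤ Real.pi * (t^(1-γ) * |ξ|^(-γ)) := by
    have k1 : (t⁻¹)^(1-γ) ≤ |ξ|^(1-γ) :=
      Real.rpow_le_rpow (inv_nonneg.2 ht.le) hξ (by linarith)
    have k2 : (t^(1-γ))⁻¹ ≤ |ξ|^(1-γ) := by rw [← Real.inv_rpow ht.le]; exact k1
    have e1 : |ξ|^(γ-1) * |ξ|^(-γ) = |ξ|⁻¹ := by
      rw [← Real.rpow_add hξpos]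
      rw [show γ-1 + -γ = (-1:ℝ) by ring, Real.rpow_neg_one]
    have e2 : |ξ|^(γ-1) ≤ t^(1-γ) := by
      rw [show γ-1 = -(1-γ) by ring, Real.rpow_neg (abs_nonneg ξ)]
      have h6 : 0 < (t^(1-γ))⁻¹ := inv_pos.2 htγpos
      calc (|ξ|^(1-γ))⁻¹ ≤ ((t^(1-γ))⁻¹)⁻¹ := by
            apply inv_anti₀ h6 k2
        _ = t^(1-γ) := inv_inv _
    calc h = Real.pi * |ξ|⁻¹ := by rw [hhdef, div_eq_mul_inv]
      _ = Real.pi * (|ξ|^(γ-1) * |ξ|^(-γ)) := by rw [e1]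
      _ ≤ Real.pi * (t^(1-γ) * |ξ|^(-γ)) := by
          refine mul_le_mul_of_nonneg_left ?_ Real.pi_pos.le
          exact mul_le_mul_of_nonneg_right e2 hξγ.le
  have hhγeq : h^γ = Real.pi^γ * |ξ|^(-γ) := by
    rw [hhdef, Real.div_rpow Real.pi_pos.le (abs_nonneg ξ), Real.rpow_neg (abs_nonneg ξ),
      div_eq_mul_inv]
  -- the oscillatory integrand and its shift
  set F : ℝ → ℂ := fun s => ((g s : ℝ) : ℂ) * Complex.exp (Complex.I * s * ξ) with hFdef
  set Fh : ℝ → ℂ := fun s => ((g (s - h) : ℝ) : ℂ) * Complex.exp (Complex.I * s * ξ) with hFhdef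
  have hexpunit : ∀ s : ℝ, ‖Complex.exp (Complex.I * s * ξ)‖ = 1 := by
    intro s
    rw [show Complex.I * (s:ℂ) * (ξ:ℂ) = ((s*ξ : ℝ) : ℂ) * Complex.I by push_cast; ring]
    exact Complex.norm_exp_ofReal_mul_I _
  have hFnorm : ∀ s, ‖F s‖ = |g s| := by
    intro s
    rw [hFdef]
    simp only []
    rw [norm_mul, hexpunit s, mul_one, Complex.norm_real, Real.norm_eq_abs]
  have hFhnorm : ∀ s, ‖Fh s‖ = |g (s - h)| := by
    intro s
    rw [hFhdef]
    simp only []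
    rw [norm_mul, hexpunit s, mul_one, Complex.norm_real, Real.norm_eq_abs]
  have hexpc : Continuous fun s : ℝ => Complex.exp (Complex.I * s * ξ) :=
    Complex.continuous_exp.comp
      ((continuous_const.mul Complex.continuous_ofReal).mul continuous_const)
  have hFcont : Continuous F :=
    (Complex.continuous_ofReal.comp hgcont).mul hexpc
  have hFhcont : Continuous Fh :=
    (Complex.continuous_ofReal.comp (hgcont.comp (continuous_id.sub continuous_const))).mul hexpc
  have hFi : ∀ a' b' : ℝ, IntervalIntegrable F volume a' b' :=
    fun a' b' => hFcont.intervalIntegrable _ _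
  have hFhi : ∀ a' b' : ℝ, IntervalIntegrable Fh volume a' b' :=
    fun a' b' => hFhcont.intervalIntegrable _ _
  set K : ℂ := ∫ s in (0:ℝ)..t, F s with hKdef
  have hgoal : (∫ s in Ioo 0 t, ((∫ y, heatKernel (t - s) (x - y) * σ s y : ℝ) : ℂ)
      * Complex.exp (Complex.I * s * ξ)) = K := by
    have hcongr : ∀ s ∈ Ioo (0:ℝ) t,
        ((∫ y, heatKernel (t - s) (x - y) * σ s y : ℝ) : ℂ)
          * Complex.exp (Complex.I * s * ξ) = F s := by
      intro s hs
      have e : ∀ y, σ s y = σ' s y := by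
        intro y
        rw [hσ'def]
        simp only []
        rw [sup_eq_left.2 hs.1.le]
      have h1 : (∫ y, heatKernel (t - s) (x - y) * σ s y) = g s := by
        calc (∫ y, heatKernel (t - s) (x - y) * σ s y)
            = ∫ y, heatKernel (t - s) (x - y) * σ' s y := by simp_rw [e]
          _ = ∫ w, (4*Real.pi)^(-(1:ℝ)/2) * Real.exp (-(w^2)/4)
                * σ' s (x - Real.sqrt (t - s) * w) :=
              HeatAux.integral_heatKernel_subst (sub_pos.2 hs.2) x (σ' s)
          _ = g s := by rw [hgdef]
      rw [h1, hFdef]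
    calc (∫ s in Ioo 0 t, ((∫ y, heatKernel (t - s) (x - y) * σ s y : ℝ) : ℂ)
        * Complex.exp (Complex.I * s * ξ))
        = ∫ s in Ioo 0 t, F s := setIntegral_congr_fun measurableSet_Ioo hcongr
      _ = ∫ s in Ioc 0 t, F s := (integral_Ioc_eq_integral_Ioo).symm
      _ = K := by rw [hKdef, intervalIntegral.integral_of_le ht.le]
  have hξne : ξ ≠ 0 := by
    intro h0
    rw [h0, abs_zero] at hξpos
    exact lt_irrefl 0 hξpos
  have hexpneg : Complex.exp (Complex.I * (h:ℝ) * ξ) = -1 := by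
    rcases lt_or_gt_of_ne hξne with hneg | hpos
    · have hhξ : h * ξ = -Real.pi := by
        rw [hhdef, abs_of_neg hneg]
        field_simp
      rw [show Complex.I * (h:ℂ) * (ξ:ℂ) = ((h*ξ : ℝ):ℂ) * Complex.I by push_cast; ring,
        hhξ]
      push_cast
      rw [show (-(Real.pi):ℂ) * Complex.I = -((Real.pi :ℂ) * Complex.I) by ring,
        Complex.exp_neg, Complex.exp_pi_mul_I]
      norm_num
    · have hhξ : h * ξ = Real.pi := by
        rw [hhdef, abs_of_pos hpos]
        field_simp
      rw [show Complex.I * (h:ℂ) * (ξ:ℂ) = ((h*ξ : ℝ):ℂ) * Complex.I by push_cast; ring,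
        hhξ]
      exact_mod_cast Complex.exp_pi_mul_I
  have e1 : (∫ s in h..(t+h), Fh s) = -K := by
    have hfs : ∀ s : ℝ, Fh (s + h) = -F s := by
      intro s
      rw [hFhdef, hFdef]
      simp only []
      rw [add_sub_cancel_right]
      rw [show Complex.I * ((s+h:ℝ):ℂ) * ξ
          = Complex.I * (s:ℝ) * ξ + Complex.I * (h:ℝ) * ξ by push_cast; ring]
      rw [Complex.exp_add, hexpneg]
      ring
    calc (∫ s in h..(t+h), Fh s) = ∫ s in (0:ℝ)+h..(t+h), Fh s := by rw [zero_add]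
      _ = ∫ s in (0:ℝ)..t, Fh (s + h) := (intervalIntegral.integral_comp_add_right Fh h).symm
      _ = ∫ s in (0:ℝ)..t, -F s := by simp_rw [hfs]
      _ = -K := by rw [intervalIntegral.integral_neg, hKdef]
  have key : K + K = (∫ s in (0:ℝ)..h, F s) + (∫ s in h..t, (F s - Fh s))
      - ∫ s in t..(t+h), Fh s := by
    have d1 : (∫ s in (0:ℝ)..h, F s) + (∫ s in h..t, F s) = K :=
      intervalIntegral.integral_add_adjacent_intervals (hFi 0 h) (hFi h t)
    have d2 : (∫ s in h..t, Fh s) + (∫ s in t..(t+h), Fh s) = ∫ s in h..(t+h), Fh s :=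
      intervalIntegral.integral_add_adjacent_intervals (hFhi h t) (hFhi t (t+h))
    have d3 : (∫ s in h..t, (F s - Fh s)) = (∫ s in h..t, F s) - ∫ s in h..t, Fh s :=
      intervalIntegral.integral_sub (hFi h t) (hFhi h t)
    linear_combination (-1 : ℂ) * d1 + d2 + e1 - d3
  have n1 : ‖∫ s in (0:ℝ)..h, F s‖ ≤ M*c₀*h := by
    have h1 := intervalIntegral.norm_integral_le_of_norm_le_const
      (C := M*c₀) (f := F) (a := 0) (b := h) (fun s _ => by rw [hFnorm]; exact hgbdd s)
    calc ‖∫ s in (0:ℝ)..h, F s‖ ≤ M*c₀ * |h - 0| := h1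
      _ = M*c₀*h := by rw [sub_zero, abs_of_pos hhpos]
  have n3 : ‖∫ s in t..(t+h), Fh s‖ ≤ M*c₀*h := by
    have h1 := intervalIntegral.norm_integral_le_of_norm_le_const
      (C := M*c₀) (f := Fh) (a := t) (b := t+h) (fun s _ => by rw [hFhnorm]; exact hgbdd _)
    calc ‖∫ s in t..(t+h), Fh s‖ ≤ M*c₀ * |t + h - t| := h1
      _ = M*c₀*h := by rw [show t + h - t = h by ring, abs_of_pos hhpos]
  have n2 : ‖∫ s in h..t, (F s - Fh s)‖ ≤ A*h^γ + 2*(M*c₀)*h := by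
    rcases le_or_gt h t with hht | hht
    · set bnd : ℝ → ℝ := fun s => L*c₀*h^γ + L*m*h^γ*((t - s) + h)^(-(γ/2)) with hbnddef
      have hbase : ∀ s ∈ Icc h t, (0:ℝ) < (t - s) + h := by
        intro s hs
        have := hs.2
        linarith
      have hcont2 : ContinuousOn (fun s : ℝ => ((t - s) + h)^(-(γ/2))) (Icc h t) := by
        apply ContinuousOn.rpow_const
        · exact (continuousOn_const.sub continuousOn_id).add continuousOn_const
        · intro s hs
          exact Or.inl (ne_of_gt (hbase s hs))
      have hbndint : IntervalIntegrable bnd volume h t := by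
        apply ContinuousOn.intervalIntegrable
        rw [uIcc_of_le hht]
        exact continuousOn_const.add (continuousOn_const.mul hcont2)
      have hptw : ∀ s ∈ uIoc h t, ‖F s - Fh s‖ ≤ bnd s := by
        intro s hs
        rw [uIoc_of_le hht] at hs
        have hFF : F s - Fh s = (((g s - g (s-h) : ℝ)):ℂ) * Complex.exp (Complex.I * s * ξ) := by
          rw [hFdef, hFhdef]
          push_cast
          ring
        rw [hFF, norm_mul, hexpunit s, mul_one, Complex.norm_real, Real.norm_eq_abs]
        exact hgdiff h s hhpos hs.2
      have hmain := intervalIntegral.norm_integral_le_of_norm_le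
        (f := fun s => F s - Fh s) (μ := volume) (a := h) (b := t) (g := bnd) hht
        (Filter.Eventually.of_forall fun s hs => hptw s (by rw [uIoc_of_le hht]; exact hs))
        hbndint
      have i2 : IntervalIntegrable (fun s => ((t - s) + h)^(-(γ/2))) volume h t := by
        apply ContinuousOn.intervalIntegrable
        rw [uIcc_of_le hht]
        exact hcont2
      have hsub2 : (∫ s in h..t, ((t - s) + h)^(-(γ/2))) = ∫ u in h..t, u^(-(γ/2)) := by
        have hbb : ∀ s : ℝ, ((t - s) + h)^(-(γ/2)) = ((t + h) - s)^(-(γ/2)) := by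
          intro s
          rw [sub_add_eq_add_sub]
        simp_rw [hbb]
        rw [intervalIntegral.integral_comp_sub_left (fun u => u^(-(γ/2))) (t+h)]
        congr 1 <;> ring
      have hval : (∫ u in h..t, u^(-(γ/2))) = (t^(1-γ/2) - h^(1-γ/2))/(1-γ/2) := by
        rw [integral_rpow (Or.inl (by linarith : (-1:ℝ) < -(γ/2)))]
        rw [show -(γ/2) + 1 = 1-γ/2 by ring]
      have heval : (∫ s in h..t, bnd s) ≤ A*h^γ := by
        have i1 : IntervalIntegrable (fun _ : ℝ => L*c₀*h^γ) volume h t :=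
          intervalIntegrable_const
        have i2' : IntervalIntegrable (fun s => L*m*h^γ*((t - s) + h)^(-(γ/2))) volume h t :=
          i2.const_mul _
        rw [hbnddef]
        rw [intervalIntegral.integral_add i1 i2', intervalIntegral.integral_const,
          intervalIntegral.integral_const_mul, hsub2, hval]
        have hhγnn : 0 ≤ h^γ := Real.rpow_nonneg hhpos.le _
        have hhnn : 0 ≤ h^(1-γ/2) := Real.rpow_nonneg hhpos.le _
        have hLc₀ : 0 ≤ L*c₀ := mul_nonneg hL.le hc₀
        have hLm : 0 ≤ L*m := mul_nonneg hL.le hm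
        rw [smul_eq_mul, hAdef]
        have e4 : (t^(1-γ/2) - h^(1-γ/2))/(1-γ/2)
            = t^(1-γ/2)/(1-γ/2) - h^(1-γ/2)/(1-γ/2) := by ring
        rw [e4]
        have q1 : 0 ≤ L*c₀*h^γ*h := mul_nonneg (mul_nonneg hLc₀ hhγnn) hhpos.le
        have q2 : 0 ≤ L*m*h^γ*(h^(1-γ/2)/(1-γ/2)) :=
          mul_nonneg (mul_nonneg hLm hhγnn) (div_nonneg hhnn hden.le)
        linarith [q1, q2]
      have hbnd0 : 0 ≤ ∫ s in h..t, bnd s := by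
        apply intervalIntegral.integral_nonneg hht
        intro s hs
        rw [hbnddef]
        have h1 : 0 ≤ L*c₀*h^γ :=
          mul_nonneg (mul_nonneg hL.le hc₀) (Real.rpow_nonneg hhpos.le _)
        have h2 : 0 ≤ L*m*h^γ*((t - s) + h)^(-(γ/2)) := by
          apply mul_nonneg (mul_nonneg (mul_nonneg hL.le hm) (Real.rpow_nonneg hhpos.le _))
          exact Real.rpow_nonneg (hbase s hs).le _
        exact add_nonneg h1 h2
      have hAh : 0 ≤ 2*(M*c₀)*h := mul_nonneg (by linarith) hhpos.le
      calc ‖∫ s in h..t, (F s - Fh s)‖ ≤ |∫ s in h..t, bnd s| := hmain.trans (le_abs_self _)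
        _ = ∫ s in h..t, bnd s := abs_of_nonneg hbnd0
        _ ≤ A*h^γ := heval
        _ ≤ A*h^γ + 2*(M*c₀)*h := by linarith
    · have hcb : ∀ s ∈ uIoc h t, ‖F s - Fh s‖ ≤ 2*(M*c₀) := by
        intro s _
        calc ‖F s - Fh s‖ ≤ ‖F s‖ + ‖Fh s‖ := norm_sub_le _ _
          _ ≤ M*c₀ + M*c₀ := add_le_add
              (by rw [hFnorm]; exact hgbdd s) (by rw [hFhnorm]; exact hgbdd _)
          _ = 2*(M*c₀) := by ring
      have h1 := intervalIntegral.norm_integral_le_of_norm_le_const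
        (C := 2*(M*c₀)) (f := fun s => F s - Fh s) (a := h) (b := t) hcb
      have habs' : |t - h| ≤ h := by
        rw [abs_of_nonpos (by linarith)]
        linarith
      have h2 : ‖∫ s in h..t, (F s - Fh s)‖ ≤ 2*(M*c₀)*h := by
        refine h1.trans ?_
        apply mul_le_mul_of_nonneg_left habs' (by linarith)
      have hAh : 0 ≤ A*h^γ := mul_nonneg hA0 (Real.rpow_nonneg hhpos.le _)
      linarith
  have hnorm2 : 2*‖K‖ = ‖K + K‖ := by
    rw [← two_smul ℝ K, norm_smul]
    norm_num
  have htotal : 2*‖K‖ ≤ 4*(M*c₀)*h + A*h^γ := by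
    rw [hnorm2, key]
    calc ‖(∫ s in (0:ℝ)..h, F s) + (∫ s in h..t, (F s - Fh s)) - ∫ s in t..(t+h), Fh s‖
        ≤ ‖(∫ s in (0:ℝ)..h, F s) + (∫ s in h..t, (F s - Fh s))‖
          + ‖∫ s in t..(t+h), Fh s‖ := norm_sub_le _ _
      _ ≤ ‖∫ s in (0:ℝ)..h, F s‖ + ‖∫ s in h..t, (F s - Fh s)‖
          + ‖∫ s in t..(t+h), Fh s‖ := by
          have := norm_add_le (∫ s in (0:ℝ)..h, F s) (∫ s in h..t, (F s - Fh s))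
          linarith
      _ ≤ M*c₀*h + (A*h^γ + 2*(M*c₀)*h) + M*c₀*h := by linarith
      _ = 4*(M*c₀)*h + A*h^γ := by ring
  rw [hgoal]
  have t1 : 4*(M*c₀)*h ≤ 4*(M*c₀)*(Real.pi*(t^(1-γ)*|ξ|^(-γ))) :=
    mul_le_mul_of_nonneg_left hconv (by linarith)
  have t2 : A*h^γ = A*Real.pi^γ*|ξ|^(-γ) := by rw [hhγeq]; ring
  have e3 : 4*(M*c₀)*(Real.pi*(t^(1-γ)*|ξ|^(-γ)))
      = 4*(M*c₀)*Real.pi*t^(1-γ)*|ξ|^(-γ) := by ring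
  have hfin : 2*‖K‖ ≤ (4*(M*c₀)*Real.pi*t^(1-γ) + A*Real.pi^γ) * |ξ|^(-γ) := by
    rw [show (4*(M*c₀)*Real.pi*t^(1-γ) + A*Real.pi^γ) * |ξ|^(-γ)
        = 4*(M*c₀)*Real.pi*t^(1-γ)*|ξ|^(-γ) + A*Real.pi^γ*|ξ|^(-γ) by ring]
    rw [e3] at t1
    linarith
  have hC2 : (4*(M*c₀)*Real.pi*t^(1-γ) + A*Real.pi^γ) ≤ 2*C := by
    rw [hCdef]
    linarith
  have hfin2 : (4*(M*c₀)*Real.pi*t^(1-γ) + A*Real.pi^γ) * |ξ|^(-γ) ≤ (2*C) * |ξ|^(-γ) :=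
    mul_le_mul_of_nonneg_right hC2 hξγ.le
  linarith
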